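/- arXiv:2507.12635 — 3 statements merged into one kernel-verified Lean document; each statement's English description precedes it below -/
import Mathlib

section
/- If a feasible basic solution to a linear program contains, for each tiny job j ∈ T, variables y_{j1},...,y_{jm} ≥ 0 with Σ_i y_{ji} = 1, and for each safe job j ∈ S, variables x_j, y_{j1},...,y_{jm} ≥ 0 with x_j + Σ_i y_{ji} = 1, plus m+1 additional constraints (so |T|+|S|+m+1 constraints total), and the number of nonzero variables is at most the number of constraints, then the number of jobs whose variables are all strictly fractional (i.e., tiny jobs with no y_{ji} = 1, and safe jobs with neither x_j = 1 nor any y_{ji} = 1) is at most m+1. -/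
/-- If a sum over `s` equals 1 and at most one term is nonzero, some term equals 1. -/
lemma aux_one {α : Type*} [DecidableEq α] (s : Finset α) (f : α → ℝ)
    (h1 : ∑ a ∈ s, f a = 1)
    (hcard : (s.filter (fun a => f a ≠ 0)).card ≤ 1) : ∃ a ∈ s, f a = 1 := by
  have hsum : ∑ a ∈ s.filter (fun a => f a ≠ 0), f a = 1 := by
    rw [Finset.sum_filter_ne_zero]; exact h1
  have hne : (s.filter (fun a => f a ≠ 0)).Nonempty := by
    by_contra h
    rw [Finset.not_nonempty_iff_eq_empty] at h
    rw [h, Finset.sum_empty] at hsum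
    norm_num at hsum
  have hc : (s.filter (fun a => f a ≠ 0)).card = 1 :=
    le_antisymm hcard (Finset.one_le_card.mpr hne)
  obtain ⟨a, ha⟩ := Finset.card_eq_one.mp hc
  refine ⟨a, ?_, ?_⟩
  · have := Finset.mem_filter.mp (ha ▸ Finset.mem_singleton_self a)
    exact this.1
  · rw [ha, Finset.sum_singleton] at hsum; exact hsum

/-- In a basic feasible solution of the LP with `|T|+|S|+m+1` constraints
(for tiny jobs `j ∈ T`: variables `y j i ≥ 0` with `∑ i, y j i = 1`; for safe jobs
`j ∈ S`: variables `x j ≥ 0` and `y j i ≥ 0` with `x j + ∑ i, y j i = 1`), if the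
number of nonzero variables is at most the number of constraints, then the number of
jobs all of whose variables are strictly fractional is at most `m+1`. -/
theorem stmt1 {ι : Type*} [DecidableEq ι] (m : ℕ) (hm : 1 ≤ m)
    (T S : Finset ι) (hTS : Disjoint T S)
    (x : ι → ℝ) (y : ι → Fin m → ℝ)
    (hxnn : ∀ j ∈ S, 0 ≤ x j)
    (hynn : ∀ j ∈ T ∪ S, ∀ i, 0 ≤ y j i)
    (hT : ∀ j ∈ T, ∑ i, y j i = 1)
    (hS : ∀ j ∈ S, x j + ∑ i, y j i = 1)
    (hbasic :
      (∑ j ∈ T ∪ S, (Finset.univ.filter (fun i : Fin m => y j i ≠ 0)).card)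
        + (S.filter (fun j => x j ≠ 0)).card
        ≤ T.card + S.card + m + 1) :
    (T.filter (fun j => ∀ i, y j i < 1)).card
      + (S.filter (fun j => x j < 1 ∧ ∀ i, y j i < 1)).card ≤ m + 1 := by
  classical
  -- lower bound for T jobs
  have hTlb : ∀ j ∈ T, 1 + (if (∀ i, y j i < 1) then 1 else 0)
      ≤ (Finset.univ.filter (fun i : Fin m => y j i ≠ 0)).card := by
    intro j hj
    by_contra h
    push_neg at h
    split_ifs at h with hfrac
    · obtain ⟨i, _, hi⟩ := aux_one Finset.univ (y j) (hT j hj) (by omega)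
      exact absurd hi (ne_of_lt (hfrac i))
    · obtain ⟨i, _, hi⟩ := aux_one Finset.univ (y j) (hT j hj) (by omega)
      have hmem : i ∈ Finset.univ.filter (fun i : Fin m => y j i ≠ 0) := by
        simp [hi]
      have := Finset.card_pos.mpr ⟨i, hmem⟩
      omega
  -- lower bound for S jobs
  have hSlb : ∀ j ∈ S,
      1 + (if (x j < 1 ∧ ∀ i, y j i < 1) then 1 else 0)
        ≤ (Finset.univ.filter (fun i : Fin m => y j i ≠ 0)).card
          + (if x j ≠ 0 then 1 else 0) := by
    intro j hj
    by_contra h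
    push_neg at h
    by_cases hx : x j = 0
    · rw [if_neg (fun hne => hne hx)] at h
      have hsum : ∑ i, y j i = 1 := by have := hS j hj; rw [hx] at this; linarith
      split_ifs at h with hfrac
      · obtain ⟨i, _, hi⟩ := aux_one Finset.univ (y j) hsum (by omega)
        exact absurd hi (ne_of_lt (hfrac.2 i))
      · obtain ⟨i, _, hi⟩ := aux_one Finset.univ (y j) hsum (by omega)
        have hmem : i ∈ Finset.univ.filter (fun i : Fin m => y j i ≠ 0) := by
          simp [hi]
        have := Finset.card_pos.mpr ⟨i, hmem⟩
        omega
    · rw [if_pos hx] at h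
      split_ifs at h with hfrac
      · have hc0 : (Finset.univ.filter (fun i : Fin m => y j i ≠ 0)).card = 0 := by
          omega
        have hall : ∀ i, y j i = 0 := by
          intro i
          by_contra hi
          have hmem : i ∈ Finset.univ.filter (fun i : Fin m => y j i ≠ 0) := by
            simp [hi]
          have := Finset.card_pos.mpr ⟨i, hmem⟩
          omega
        have hz : ∑ i, y j i = 0 := Finset.sum_eq_zero fun i _ => hall i
        have hx1 : x j = 1 := by have := hS j hj; rw [hz] at this; linarith
        linarith [hfrac.1]
      · omega
  -- sum the bounds
  have key : T.card + (T.filter (fun j => ∀ i, y j i < 1)).card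
      + (S.card + (S.filter (fun j => x j < 1 ∧ ∀ i, y j i < 1)).card)
      ≤ (∑ j ∈ T ∪ S, (Finset.univ.filter (fun i : Fin m => y j i ≠ 0)).card)
        + (S.filter (fun j => x j ≠ 0)).card := by
    rw [Finset.sum_union hTS, Finset.card_filter, Finset.card_filter,
      Finset.card_filter]
    have h1 : T.card + ∑ j ∈ T, (if (∀ i, y j i < 1) then 1 else 0)
        ≤ ∑ j ∈ T, (Finset.univ.filter (fun i : Fin m => y j i ≠ 0)).card := by
      rw [Finset.card_eq_sum_ones T, ← Finset.sum_add_distrib]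
      exact Finset.sum_le_sum hTlb
    have h2 : S.card + ∑ j ∈ S, (if (x j < 1 ∧ ∀ i, y j i < 1) then 1 else 0)
        ≤ ∑ j ∈ S, (Finset.univ.filter (fun i : Fin m => y j i ≠ 0)).card
          + ∑ j ∈ S, (if x j ≠ 0 then 1 else 0) := by
      rw [Finset.card_eq_sum_ones S, ← Finset.sum_add_distrib, ← Finset.sum_add_distrib]
      exact Finset.sum_le_sum hSlb
    omega
  omega
end

section
/- Under list scheduling, if a set A of jobs is scheduled on m machines by repeatedly assigning each job to a currently least-loaded machine, then the final makespan is at most (1/m)·Σ_{j∈A} p_j + max_{j∈A} p_j. -/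
lemma sum_filter_partition {ι : Type*} [DecidableEq ι] {m : ℕ}
    (p : ι → ℝ) (f : ι → Fin m) (t : List ι) :
    ∑ i : Fin m, ((t.filter (fun j => f j = i)).map p).sum = (t.map p).sum := by
  induction t with
  | nil => simp
  | cons a t ih =>
    simp only [List.filter_cons, List.map_cons, List.sum_cons]
    rw [← ih]
    have h : ∀ i : Fin m,
        (((if decide (f a = i) = true then a :: t.filter (fun j => f j = i)
          else t.filter (fun j => f j = i)).map p).sum)
        = (if f a = i then p a else 0) + ((t.filter (fun j => f j = i)).map p).sum := by
      intro i
      by_cases hfa : f a = i <;> simp [hfa]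
    simp only [h]
    rw [Finset.sum_add_distrib, Finset.sum_ite_eq Finset.univ (f a) (fun _ => p a)]
    simp

lemma aux9 {ι : Type*} [DecidableEq ι] (m : ℕ) [NeZero m]
    (p : ι → ℝ) (f : ι → Fin m) (l : List ι) :
    ∀ (h : l.toFinset.Nonempty) (_ : l.Nodup) (_ : ∀ j ∈ l, 0 ≤ p j)
    (_ : ∀ k : Fin l.length, ∀ i : Fin m,
      (((l.take k).filter (fun j => f j = f (l.get k))).map p).sum
        ≤ (((l.take k).filter (fun j => f j = i)).map p).sum),
    ∀ i : Fin m,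
      ((l.filter (fun j => f j = i)).map p).sum
        ≤ (1 / (m : ℝ)) * (l.map p).sum + l.toFinset.sup' h p := by
  induction l using List.reverseRecOn with
  | nil => intro h; simp at h
  | append_singleton t a ih =>
    intro h hnd hp hLS i
    have hm : (0:ℝ) < m := by exact_mod_cast Nat.pos_of_ne_zero (NeZero.ne m)
    have hpa : 0 ≤ p a := hp a (by simp)
    have htsum : 0 ≤ (t.map p).sum := by
      apply List.sum_nonneg
      intro x hx
      obtain ⟨j, hj, rfl⟩ := List.mem_map.1 hx
      exact hp j (by simp [hj])
    have hlsum : ((t ++ [a]).map p).sum = (t.map p).sum + p a := by simp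
    have hsup_a : p a ≤ (t ++ [a]).toFinset.sup' h p :=
      Finset.le_sup' p (by simp)
    by_cases hi : f a = i
    · -- machine receiving last job
      subst hi
      have hfilter : (t ++ [a]).filter (fun j => f j = f a) =
          t.filter (fun j => f j = f a) ++ [a] := by
        simp [List.filter_append]
      -- averaging step: use hLS at k = t.length
      have hk : t.length < (t ++ [a]).length := by simp
      have hget : (t ++ [a]).get ⟨t.length, hk⟩ = a := by
        simp [List.get_eq_getElem, List.getElem_append_right]
      have htake : (t ++ [a]).take t.length = t := by
        simp [List.take_append_of_le_length]
      have havg := hLS ⟨t.length, hk⟩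
      rw [hget] at havg
      simp only [htake] at havg
      have hmL : (m : ℝ) * ((t.filter (fun j => f j = f a)).map p).sum ≤ (t.map p).sum := by
        rw [← sum_filter_partition p f t]
        calc (m:ℝ) * ((t.filter (fun j => f j = f a)).map p).sum
              = ∑ _i : Fin m, ((t.filter (fun j => f j = f a)).map p).sum := by
              simp [Finset.sum_const, nsmul_eq_mul]
          _ ≤ ∑ i : Fin m, ((t.filter (fun j => f j = i)).map p).sum :=
              Finset.sum_le_sum (fun i _ => havg i)
      have hLle : ((t.filter (fun j => f j = f a)).map p).sum
          ≤ (1 / (m:ℝ)) * (t.map p).sum := by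
        rw [div_mul_eq_mul_div, le_div_iff₀ hm]
        linarith [hmL]
      rw [hfilter]
      simp only [List.map_append, List.sum_append, List.map_cons, List.map_nil,
        List.sum_cons, List.sum_nil]
      rw [mul_add]
      have h0 : (0:ℝ) ≤ 1 / (m:ℝ) * (p a + 0) := by positivity
      linarith [hLle, hsup_a]
    · -- other machines
      have hfilter : (t ++ [a]).filter (fun j => f j = i) =
          t.filter (fun j => f j = i) := by
        simp [List.filter_append, hi]
      rw [hfilter]
      rcases eq_or_ne t [] with rfl | ht
      · have : (0:ℝ) ≤ (1 / (m:ℝ)) * (([] ++ [a]).map p).sum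
            + ([] ++ [a]).toFinset.sup' h p := by
          have : (0:ℝ) ≤ (1 / (m:ℝ)) * (([] ++ [a]).map p).sum := by
            simp; positivity
          linarith
        simpa using this
      · have ht' : t.toFinset.Nonempty := by
          simpa using (List.toFinset_nonempty_iff _).2 ht
        have hnd' : t.Nodup := (List.nodup_append.1 hnd).1
        have hp' : ∀ j ∈ t, 0 ≤ p j := fun j hj => hp j (by simp [hj])
        have hLS' : ∀ k : Fin t.length, ∀ i : Fin m,
            (((t.take k).filter (fun j => f j = f (t.get k))).map p).sum
              ≤ (((t.take k).filter (fun j => f j = i)).map p).sum := by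
          intro k i
          have hk : (k : ℕ) < (t ++ [a]).length := by
            have := k.2; simp
          have htake : (t ++ [a]).take k = t.take k :=
            List.take_append_of_le_length (le_of_lt k.2)
          have hget : (t ++ [a]).get ⟨k, hk⟩ = t.get k := by
            simp [List.get_eq_getElem, List.getElem_append_left k.2]
          have := hLS ⟨k, hk⟩ i
          rwa [hget, htake] at this
        have hIH := ih ht' hnd' hp' hLS' i
        have hsum : (t.map p).sum ≤ ((t ++ [a]).map p).sum := by
          rw [hlsum]; linarith
        have hsup : t.toFinset.sup' ht' p ≤ (t ++ [a]).toFinset.sup' h p := by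
          apply Finset.sup'_le
          intro b hb
          exact Finset.le_sup' p (by simp at hb ⊢; exact Or.inr hb)
        calc ((t.filter (fun j => f j = i)).map p).sum
            ≤ (1 / (m:ℝ)) * (t.map p).sum + t.toFinset.sup' ht' p := hIH
          _ ≤ (1 / (m:ℝ)) * ((t ++ [a]).map p).sum + (t ++ [a]).toFinset.sup' h p := by
              have : (1 / (m:ℝ)) * (t.map p).sum ≤ (1 / (m:ℝ)) * ((t ++ [a]).map p).sum :=
                mul_le_mul_of_nonneg_left hsum (by positivity)
              linarith

/-- List scheduling. The jobs of the list `l` (with distinct jobs, set `A =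
l.toFinset`) are assigned one at a time by `f` to the `m` machines; the hypothesis `hLS`
says each job goes to a machine whose current load (total processing time of earlier jobs
of the list assigned to it) is minimal. Then every final machine load (hence the
makespan) is at most `(1/m)·∑_{j∈A} p j + max_{j∈A} p j`. -/
theorem stmt9 {ι : Type*} [DecidableEq ι] (m : ℕ) [NeZero m]
    (p : ι → ℝ) (l : List ι) (hl : l ≠ []) (hnd : l.Nodup)
    (hp : ∀ j ∈ l, 0 ≤ p j)
    (f : ι → Fin m)
    (hLS : ∀ k : Fin l.length, ∀ i : Fin m,
      (((l.take k).filter (fun j => f j = f (l.get k))).map p).sum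
        ≤ (((l.take k).filter (fun j => f j = i)).map p).sum) :
    ∀ i : Fin m,
      ((l.filter (fun j => f j = i)).map p).sum
        ≤ (1 / (m : ℝ)) * (l.map p).sum
          + l.toFinset.sup' (by simpa using hl) p := by
  exact aux9 m p f l (by simpa using (List.toFinset_nonempty_iff _).2 hl) hnd hp hLS
end

section
/- Let B_1, ..., B_d be finite lists of jobs, where within each B_i all jobs have the same penalty and jobs are sorted in non-increasing order of processing time. For any feasible solution that rejects exactly k_i jobs from each B_i, there exists a feasible solution of cost at most as large that rejects exactly the first k_i jobs (those with largest processing times) of each B_i. -/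
section Aux

private lemma fin_emb_le {a b : ℕ} (f : Fin a ↪o Fin b) (n : Fin a) :
    (f n : ℕ) ≤ b - a + n := by
  have key : ∀ c : ℕ, ∀ s t : Fin a, s.val + c = t.val → (f s).val + c ≤ (f t).val := by
    intro c
    induction c with
    | zero =>
      intro s t h
      have : s = t := Fin.ext (by omega)
      simp [this]
    | succ c ih =>
      intro s t h
      have ht' : s.val + c < a := by have := t.isLt; omega
      have h1 := ih s ⟨s.val + c, ht'⟩ rfl
      have h2 : f ⟨s.val + c, ht'⟩ < f t := by
        apply f.strictMono
        rw [Fin.lt_def]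
        simp; omega
      rw [Fin.lt_def] at h2
      omega
  have ha : 0 < a := n.pos
  have h1 := key (a - 1 - n.val) n ⟨a - 1, by omega⟩ (by simp; have := n.isLt; omega)
  have h2 : (f ⟨a - 1, by omega⟩).val < b := (f _).isLt
  have h3 := n.isLt
  omega

private lemma drop_le_of_sublist {ι : Type*} (p : ι → ℝ) (L S : List ι)
    (hs : S.Sublist L) (hsort : L.Pairwise (fun a b => p b ≤ p a))
    (n : ℕ) (hn : n < S.length) :
    p (L[L.length - S.length + n]'(by have := hs.length_le; omega)) ≤ p (S[n]'hn) := by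
  obtain ⟨f, hf⟩ := List.sublist_iff_exists_fin_orderEmbedding_get_eq.mp hs
  have hb := fin_emb_le f ⟨n, hn⟩
  have heq : S[n]'hn = L[(f ⟨n, hn⟩ : ℕ)]'(f ⟨n, hn⟩).isLt := by
    simpa [List.get_eq_getElem] using hf ⟨n, hn⟩
  rw [heq]
  simp only [Fin.getElem_fin] at hb ⊢
  rcases eq_or_lt_of_le (show ((f ⟨n, hn⟩ : Fin L.length) : ℕ) ≤ L.length - S.length + n from by
      simpa using hb) with h | h
  · exact le_of_eq (congrArg p (by congr 1; omega))
  · have := List.pairwise_iff_get.mp hsort ⟨(f ⟨n, hn⟩ : ℕ), (f ⟨n, hn⟩).isLt⟩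
      ⟨L.length - S.length + n, by have := hs.length_le; omega⟩ (by simpa [Fin.lt_def] using h)
    simpa [List.get_eq_getElem] using this

private lemma sum_le_sum_inj {α : Type*} [DecidableEq α] {s t : Finset α} {f g : α → ℝ}
    (e : α → α)
    (hmap : ∀ a ∈ s, e a ∈ t) (hinj : ∀ a ∈ s, ∀ b ∈ s, e a = e b → a = b)
    (hle : ∀ a ∈ s, f a ≤ g (e a)) (hg : ∀ a ∈ t, 0 ≤ g a) :
    ∑ a ∈ s, f a ≤ ∑ a ∈ t, g a :=
  calc ∑ a ∈ s, f a ≤ ∑ a ∈ s, g (e a) := Finset.sum_le_sum hle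
    _ = ∑ a ∈ s.image e, g a := (Finset.sum_image hinj).symm
    _ ≤ ∑ a ∈ t, g a := Finset.sum_le_sum_of_subset_of_nonneg
        (Finset.image_subset_iff.mpr hmap) (fun a ha _ => hg a ha)

end Aux

/-- Given groups `B 1, …, B d` of jobs, each group consisting of jobs of
equal penalty sorted in non-increasing order of processing time, any feasible solution
rejecting exactly `k i` jobs from each group `B i` can be turned into a feasible
solution, of cost at most as large, that rejects from each `B i` exactly its first
`k i` jobs (those of largest processing time). -/
theorem stmt17 {ι : Type*} [DecidableEq ι] (m : ℕ) [NeZero m] (d : ℕ)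
    (J : Finset ι) (p e : ι → ℝ) (U : ℝ)
    (hp : ∀ j ∈ J, 0 ≤ p j)
    (B : Fin d → List ι) (k : Fin d → ℕ)
    (hBJ : ∀ i, ∀ j ∈ B i, j ∈ J)
    (hnd : ∀ i, (B i).Nodup)
    (hdisj : ∀ i i', i ≠ i' → ∀ j ∈ B i, j ∉ B i')
    (hpen : ∀ i, ∀ j ∈ B i, ∀ j' ∈ B i, e j = e j')
    (hsorted : ∀ i, (B i).Pairwise (fun a b => p b ≤ p a))
    (σ : ι → Option (Fin m))
    (hfeas : ∑ j ∈ J.filter (fun j => σ j ≠ none), p j ≤ U)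
    (hrej : ∀ i, ((B i).filter (fun j => σ j = none)).length = k i) :
    ∃ σ' : ι → Option (Fin m),
      (∑ j ∈ J.filter (fun j => σ' j ≠ none), p j ≤ U)
      ∧ ((Finset.univ.sup' Finset.univ_nonempty
            (fun i => ∑ j ∈ J.filter (fun j => σ' j = some i), p j))
          + ∑ j ∈ J.filter (fun j => σ' j = none), e j
          ≤ (Finset.univ.sup' Finset.univ_nonempty
            (fun i => ∑ j ∈ J.filter (fun j => σ j = some i), p j))
          + ∑ j ∈ J.filter (fun j => σ j = none), e j)
      ∧ (∀ i, ∀ j ∈ B i, (σ' j = none ↔ j ∈ (B i).take (k i))) := by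
  classical
  set O : Fin d → List ι := fun i => (B i).filter (fun j => σ j ≠ none) with hOdef
  have hk : ∀ i, k i ≤ (B i).length := by
    intro i; rw [← hrej i]; exact List.length_filter_le _ _
  have hOlen : ∀ i, (O i).length = (B i).length - k i := by
    intro i
    have h := List.length_eq_length_filter_add (l := B i) (fun j => decide (σ j = none))
    have h2 : (B i).filter (fun j => !decide (σ j = none)) = O i := by
      simp [hOdef]
    rw [h2] at h
    have h3 := hrej i
    omega
  have hOsub : ∀ i, (O i).Sublist (B i) := fun i => List.filter_sublist
  have hOnd : ∀ i, (O i).Nodup := fun i => (hnd i).sublist (hOsub i)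
  have hOmem : ∀ i, ∀ j ∈ O i, σ j ≠ none := by
    intro i j hj
    have := (List.mem_filter.mp hj).2
    simpa using this
  have hOmemB : ∀ i, ∀ j ∈ O i, j ∈ B i := fun i j hj => (List.mem_filter.mp hj).1
  have hidx : ∀ i, ∀ j ∈ B i, (B i).idxOf j < (B i).length :=
    fun i j hj => List.idxOf_lt_length_iff.mpr hj
  have hkey : ∀ i, ∀ n, ∀ (hn : n < (O i).length),
      p ((B i)[k i + n]'(by have := hOlen i; omega)) ≤ p ((O i)[n]'hn) := by
    intro i n hn
    have h := drop_le_of_sublist p (B i) (O i) (hOsub i) (hsorted i) n hn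
    have hidxeq : (B i).length - (O i).length + n = k i + n := by
      have := hOlen i; have := hk i; omega
    rw [show ((B i)[(B i).length - (O i).length + n]'(by have := (hOsub i).length_le; omega))
        = ((B i)[k i + n]'(by have := hOlen i; omega)) from by congr 1] at h
    exact h
  -- the new assignment
  set σ' : ι → Option (Fin m) := fun j =>
    if h : ∃ i, j ∈ B i then
      (if (B h.choose).idxOf j < k h.choose then none
       else ((O h.choose)[(B h.choose).idxOf j - k h.choose]?).bind σ)
    else σ j
    with hσ'def
  have hchoice : ∀ i, ∀ j ∈ B i, ∀ (h : ∃ i', j ∈ B i'), h.choose = i := by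
    intro i j hj h
    by_contra hne
    exact hdisj h.choose i hne j h.choose_spec hj
  have hσ'B : ∀ i, ∀ j ∈ B i, σ' j = if (B i).idxOf j < k i then none
      else ((O i)[(B i).idxOf j - k i]?).bind σ := by
    intro i j hj
    have h : ∃ i', j ∈ B i' := ⟨i, hj⟩
    rw [hσ'def]
    simp only
    rw [dif_pos h, hchoice i j hj h]
  have hσ'out : ∀ j, (∀ i, j ∉ B i) → σ' j = σ j := by
    intro j hj
    rw [hσ'def]
    simp only
    rw [dif_neg (by push_neg; exact hj)]
  have hacc : ∀ i, ∀ j, ∀ (hj : j ∈ B i) (hge : k i ≤ (B i).idxOf j),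
      σ' j = σ ((O i)[(B i).idxOf j - k i]'(by
        have q1 := hidx i j hj; have q2 := hOlen i; omega)) := by
    intro i j hj hge
    rw [hσ'B i j hj, if_neg (by omega)]
    rw [List.getElem?_eq_getElem (by have q1 := hidx i j hj; have q2 := hOlen i; omega)]
    rfl
  have htake : ∀ i, ∀ j ∈ B i, (j ∈ (B i).take (k i) ↔ (B i).idxOf j < k i) := by
    intro i j hj
    constructor
    · intro hmem
      obtain ⟨r, hr, hrj⟩ := List.getElem_of_mem hmem
      have hr' : r < k i ∧ r < (B i).length := by
        simp [List.length_take] at hr; omega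
      have heq : (B i)[r]'hr'.2 = j := List.getElem_take.symm.trans hrj
      have := List.Nodup.idxOf_getElem (hnd i) r hr'.2
      rw [heq] at this
      omega
    · intro hlt
      have hr2 : (B i).idxOf j < (B i).length := hidx i j hj
      have : ((B i).take (k i))[(B i).idxOf j]'(by simp [List.length_take]; omega) = j := by
        rw [List.getElem_take]
        exact List.getElem_idxOf hr2
      rw [← this]
      exact List.getElem_mem _
  have hiff : ∀ i, ∀ j ∈ B i, (σ' j = none ↔ j ∈ (B i).take (k i)) := by
    intro i j hj
    by_cases hlt : (B i).idxOf j < k i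
    · rw [hσ'B i j hj, if_pos hlt]
      simp [(htake i j hj).mpr hlt]
    · rw [hacc i j hj (le_of_not_gt hlt)]
      have h1 : σ ((O i)[(B i).idxOf j - k i]'(by
          have q1 := hidx i j hj; have q2 := hOlen i; have q3 := le_of_not_gt hlt; omega)) ≠ none :=
        hOmem i _ (List.getElem_mem _)
      constructor
      · intro h; exact absurd h h1
      · intro h; exact absurd ((htake i j hj).mp h) hlt
  -- the union of the groups
  set G : Finset ι := Finset.univ.biUnion (fun i => (B i).toFinset) with hGdef
  have hGJ : G ⊆ J := by
    intro j hj
    rw [hGdef, Finset.mem_biUnion] at hj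
    obtain ⟨i, _, hi⟩ := hj
    exact hBJ i j (List.mem_toFinset.mp hi)
  have houtside : ∀ j ∈ J \ G, σ' j = σ j := by
    intro j hj
    apply hσ'out
    intro i hji
    have := (Finset.mem_sdiff.mp hj).2
    exact this (Finset.mem_biUnion.mpr ⟨i, Finset.mem_univ i, List.mem_toFinset.mpr hji⟩)
  have hsplit : ∀ (f : ι → ℝ) (P : ι → Prop) (inst : DecidablePred P),
      ∑ j ∈ @Finset.filter ι P inst J, f j
        = ∑ j ∈ @Finset.filter ι P inst (J \ G), f j
          + ∑ i, ∑ j ∈ @Finset.filter ι P inst ((B i).toFinset), f j := by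
    intro f P inst
    have hJ : J = (J \ G) ∪ G := (Finset.sdiff_union_of_subset hGJ).symm
    have hpd : Set.PairwiseDisjoint (↑(Finset.univ : Finset (Fin d)))
        (fun i => @Finset.filter ι P inst ((B i).toFinset)) := by
      intro i _ i' _ hne
      apply Finset.disjoint_left.mpr
      intro a ha ha'
      have h1 : a ∈ B i := List.mem_toFinset.mp (Finset.mem_of_mem_filter a ha)
      have h2 : a ∈ B i' := List.mem_toFinset.mp (Finset.mem_of_mem_filter a ha')
      exact hdisj i i' hne a h1 h2
    conv_lhs => rw [hJ]
    rw [Finset.filter_union, Finset.sum_union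
      (Finset.disjoint_filter_filter Finset.sdiff_disjoint),
      hGdef, Finset.filter_biUnion, Finset.sum_biUnion hpd]
  have hout : ∀ (f : ι → ℝ) (P : Option (Fin m) → Prop) (instP : DecidablePred P),
      ∑ j ∈ (J \ G).filter (fun j => P (σ' j)), f j
        = ∑ j ∈ (J \ G).filter (fun j => P (σ j)), f j := by
    intro f P instP
    apply Finset.sum_congr _ (fun _ _ => rfl)
    apply Finset.filter_congr
    intro j hj
    rw [houtside j hj]
  have hnonneg : ∀ i, ∀ a ∈ (B i).toFinset, 0 ≤ p a := by
    intro i a ha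
    exact hp a (hBJ i a (List.mem_toFinset.mp ha))
  have hgroup : ∀ i (Q : Option (Fin m) → Prop) (instQ : DecidablePred Q), ¬ Q none →
      ∑ j ∈ (B i).toFinset.filter (fun j => Q (σ' j)), p j
        ≤ ∑ j ∈ (B i).toFinset.filter (fun j => Q (σ j)), p j := by
    intro i Q instQ hQ
    apply sum_le_sum_inj (e := fun j => (O i).getD ((B i).idxOf j - k i) j)
    · intro a ha
      rw [Finset.mem_filter, List.mem_toFinset] at ha
      obtain ⟨haB, hQa⟩ := ha
      have hge : k i ≤ (B i).idxOf a := by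
        by_contra hlt
        rw [hσ'B i a haB, if_pos (by omega)] at hQa
        exact hQ hQa
      have hlt' : (B i).idxOf a - k i < (O i).length := by
        have q1 := hidx i a haB; have q2 := hOlen i; omega
      have hea : (O i).getD ((B i).idxOf a - k i) a = (O i)[(B i).idxOf a - k i]'hlt' :=
        List.getD_eq_getElem _ _ hlt'
      rw [Finset.mem_filter, List.mem_toFinset, hea]
      refine ⟨hOmemB i _ (List.getElem_mem _), ?_⟩
      rw [hacc i a haB hge] at hQa
      exact hQa
    · intro a ha b hb heab
      rw [Finset.mem_filter, List.mem_toFinset] at ha hb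
      obtain ⟨haB, hQa⟩ := ha
      obtain ⟨hbB, hQb⟩ := hb
      have hgea : k i ≤ (B i).idxOf a := by
        by_contra hlt
        rw [hσ'B i a haB, if_pos (by omega)] at hQa
        exact hQ hQa
      have hgeb : k i ≤ (B i).idxOf b := by
        by_contra hlt
        rw [hσ'B i b hbB, if_pos (by omega)] at hQb
        exact hQ hQb
      have hlta : (B i).idxOf a - k i < (O i).length := by
        have q1 := hidx i a haB; have q2 := hOlen i; omega
      have hltb : (B i).idxOf b - k i < (O i).length := by
        have q1 := hidx i b hbB; have q2 := hOlen i; omega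
      rw [List.getD_eq_getElem _ _ hlta, List.getD_eq_getElem _ _ hltb] at heab
      have hsubeq : (B i).idxOf a - k i = (B i).idxOf b - k i :=
        ((hOnd i).getElem_inj_iff).mp heab
      have hidxeq : (B i).idxOf a = (B i).idxOf b := by omega
      have hga := List.getElem_idxOf (hidx i a haB)
      have hgb := List.getElem_idxOf (hidx i b hbB)
      rw [← hga, ← hgb]
      exact ((hnd i).getElem_inj_iff).mpr hidxeq
    · intro a ha
      rw [Finset.mem_filter, List.mem_toFinset] at ha
      obtain ⟨haB, hQa⟩ := ha
      have hge : k i ≤ (B i).idxOf a := by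
        by_contra hlt
        rw [hσ'B i a haB, if_pos (by omega)] at hQa
        exact hQ hQa
      have hlt' : (B i).idxOf a - k i < (O i).length := by
        have q1 := hidx i a haB; have q2 := hOlen i; omega
      rw [List.getD_eq_getElem _ _ hlt']
      have h := hkey i ((B i).idxOf a - k i) hlt'
      have hia : (B i)[k i + ((B i).idxOf a - k i)]'(by have := hOlen i; omega) = a := by
        have h2 : (B i)[k i + ((B i).idxOf a - k i)]'(by have := hOlen i; omega)
            = (B i)[(B i).idxOf a]'(hidx i a haB) := by congr 1; omega
        rw [h2]
        exact List.getElem_idxOf (hidx i a haB)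
      exact le_trans (le_of_eq (congrArg p hia.symm)) h
    · intro a ha
      exact hnonneg i a (Finset.mem_of_mem_filter a ha)
  -- penalty sums per group are equal
  have hpeng : ∀ i, ∑ j ∈ (B i).toFinset.filter (fun j => σ' j = none), e j
      = ∑ j ∈ (B i).toFinset.filter (fun j => σ j = none), e j := by
    intro i
    have hs1 : (B i).toFinset.filter (fun j => σ' j = none) = ((B i).take (k i)).toFinset := by
      ext j
      rw [Finset.mem_filter, List.mem_toFinset, List.mem_toFinset]
      constructor
      · rintro ⟨hjB, hnone⟩
        exact (hiff i j hjB).mp hnone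
      · intro hjt
        have hjB : j ∈ B i := List.mem_of_mem_take hjt
        exact ⟨hjB, (hiff i j hjB).mpr hjt⟩
    have hs2 : (B i).toFinset.filter (fun j => σ j = none)
        = ((B i).filter (fun j => σ j = none)).toFinset := by
      ext j
      rw [Finset.mem_filter, List.mem_toFinset, List.mem_toFinset, List.mem_filter]
      simp
    rw [hs1, hs2]
    by_cases hBi : B i = []
    · simp [hBi]
    · obtain ⟨j₀, hj₀⟩ := List.exists_mem_of_ne_nil _ hBi
      have hcard1 : (((B i).take (k i)).toFinset).card = k i := by
        rw [List.toFinset_card_of_nodup ((hnd i).sublist (List.take_sublist _ _)),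
          List.length_take]
        have := hk i; omega
      have hcard2 : (((B i).filter (fun j => σ j = none)).toFinset).card = k i := by
        rw [List.toFinset_card_of_nodup ((hnd i).sublist List.filter_sublist)]
        exact hrej i
      rw [Finset.sum_eq_card_nsmul (b := e j₀)
          (fun a ha => hpen i a (List.mem_of_mem_take (List.mem_toFinset.mp ha)) j₀ hj₀),
        Finset.sum_eq_card_nsmul (b := e j₀)
          (fun a ha => hpen i a (List.mem_of_mem_filter (List.mem_toFinset.mp ha)) j₀ hj₀),
        hcard1, hcard2]
  refine ⟨σ', ?_, ?_, hiff⟩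
  · calc ∑ j ∈ J.filter (fun j => σ' j ≠ none), p j
        = ∑ j ∈ (J \ G).filter (fun j => σ' j ≠ none), p j
          + ∑ i, ∑ j ∈ (B i).toFinset.filter (fun j => σ' j ≠ none), p j :=
          hsplit p _ _
      _ ≤ ∑ j ∈ (J \ G).filter (fun j => σ j ≠ none), p j
          + ∑ i, ∑ j ∈ (B i).toFinset.filter (fun j => σ j ≠ none), p j := by
          apply add_le_add
          · exact le_of_eq (hout p (fun o => o ≠ none) _)
          · exact Finset.sum_le_sum (fun i _ => hgroup i (fun o => o ≠ none) _ (by simp))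
      _ = ∑ j ∈ J.filter (fun j => σ j ≠ none), p j := (hsplit p _ _).symm
      _ ≤ U := hfeas
  · apply add_le_add
    · apply Finset.sup'_le
      intro t _
      have hload : ∑ j ∈ J.filter (fun j => σ' j = some t), p j
          ≤ ∑ j ∈ J.filter (fun j => σ j = some t), p j := by
        calc ∑ j ∈ J.filter (fun j => σ' j = some t), p j
            = ∑ j ∈ (J \ G).filter (fun j => σ' j = some t), p j
              + ∑ i, ∑ j ∈ (B i).toFinset.filter (fun j => σ' j = some t), p j :=
              hsplit p _ _
          _ ≤ ∑ j ∈ (J \ G).filter (fun j => σ j = some t), p j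
              + ∑ i, ∑ j ∈ (B i).toFinset.filter (fun j => σ j = some t), p j := by
              apply add_le_add
              · exact le_of_eq (hout p (fun o => o = some t) _)
              · exact Finset.sum_le_sum (fun i _ => hgroup i (fun o => o = some t) _ (by simp))
          _ = ∑ j ∈ J.filter (fun j => σ j = some t), p j := (hsplit p _ _).symm
      exact le_trans hload (Finset.le_sup'
        (fun i => ∑ j ∈ J.filter (fun j => σ j = some i), p j) (Finset.mem_univ t))
    · apply le_of_eq
      calc ∑ j ∈ J.filter (fun j => σ' j = none), e j
          = ∑ j ∈ (J \ G).filter (fun j => σ' j = none), e j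
            + ∑ i, ∑ j ∈ (B i).toFinset.filter (fun j => σ' j = none), e j :=
            hsplit e _ _
        _ = ∑ j ∈ (J \ G).filter (fun j => σ j = none), e j
            + ∑ i, ∑ j ∈ (B i).toFinset.filter (fun j => σ j = none), e j := by
            refine congrArg₂ (· + ·) ?_ ?_
            · exact hout e (fun o => o = none) _
            · exact Finset.sum_congr rfl (fun i _ => hpeng i)
        _ = ∑ j ∈ J.filter (fun j => σ j = none), e j := (hsplit e _ _).symm
end
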